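/- Let G be a countably infinite set and V : G → ℝ such that (a) the image of V has no accumulation point in ℝ and (b) every level set {z ∈ G : V(z) = x} is finite; enumerate the nonnegative values of V as 0 ≤ r_0 < r_1 < r_2 < ⋯ and the negative values as 0 > t_0 > t_1 > ⋯. Let (g_z)_{z∈G} be real random variables on a probability space (Ω, P) such that the configuration Π(ω) = Σ_{z∈G} δ_{V(z)+g_z(ω)} is almost surely a locally finite measure on ℝ, and such that: if V is bounded below then (r_n − r_{n−1})^{-1} · max{|g_z| : z ∈ G, V(z) ∈ [0, r_n]} → 0 almost surely as n → ∞; if V is bounded above then |t_n − t_{n−1}|^{-1} · max{|g_z| : z ∈ G, V(z) ∈ [t_n, 0)} → 0 almost surely; and if V is neither bounded below nor bounded above then both limits hold almost surely. Then for all finite subsets S, T ⊆ G with |S| ≠ |T|, the laws of the random measures Π_S and Π_T are mutually singular after completion. -/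

import Mathlib

open MeasureTheory ProbabilityTheory Filter Set
open scoped ENNReal NNReal Classical

/-- The configuration `Π_S = Σ_{z ∈ G ∖ S} δ_{V(z) + g(z)}` as a Borel measure on `ℝ`. -/
noncomputable def projPerturbedLattice {G : Type*} (V : G → ℝ) (g : G → ℝ) (S : Set G) :
    Measure ℝ :=
  Measure.sum (fun z : {z : G // z ∉ S} => Measure.dirac (V z.1 + g z.1))

-- counting lemma
lemma tsum_ite_eq_card {ι : Type*} (p : ι → Prop) (h : {i | p i}.Finite) :
    ∑' i, (if p i then (1 : ℝ≥0∞) else 0) = h.toFinset.card := by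
  classical
  rw [tsum_eq_sum (s := h.toFinset) (by intro i hi; simp [Set.Finite.mem_toFinset] at hi; simp [hi])]
  rw [Finset.sum_congr rfl (fun i hi => if_pos (by simpa [Set.Finite.mem_toFinset] using hi)),
    Finset.sum_const, nsmul_eq_mul, mul_one]

lemma proj_apply {G : Type*} (V : G → ℝ) (g : G → ℝ) (S : Set G) {s : Set ℝ}
    (hs : MeasurableSet s) :
    projPerturbedLattice V g S s
      = ∑' z : {z : G // z ∉ S}, (if V z.1 + g z.1 ∈ s then (1 : ℝ≥0∞) else 0) := by
  rw [projPerturbedLattice, Measure.sum_apply _ hs]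
  congr 1; ext z
  rw [Measure.dirac_apply' _ hs, Set.indicator_apply]
  rfl

lemma measurable_proj {G : Type*} [Countable G] {Ω : Type*} [MeasurableSpace Ω]
    (V : G → ℝ) (g : G → Ω → ℝ) (hg : ∀ z, Measurable (g z)) (S : Set G) :
    Measurable (fun ω => projPerturbedLattice V (fun z => g z ω) S) := by
  apply Measure.measurable_of_measurable_coe
  intro s hs
  simp only [projPerturbedLattice, Measure.sum_apply _ hs, Measure.dirac_apply' _ hs]
  exact Measurable.ennreal_tsum fun z =>
    (measurable_const.indicator hs).comp ((hg z.1).const_add (V z.1))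

lemma count_eq {G : Type*} [Countable G] (V : G → ℝ) (g : G → ℝ)
    (W U : Set ℝ) (hW : MeasurableSet W)
    (hU : {z : G | V z ∈ U}.Finite)
    (hbi : ∀ z : G, (V z + g z ∈ W ↔ V z ∈ U))
    (F : Finset G) (hsub : ∀ z ∈ F, V z ∈ U) :
    projPerturbedLattice V g (↑F) W + F.card = (hU.toFinset.card : ℝ≥0∞) := by
  classical
  rw [proj_apply V g _ hW]
  rw [tsum_congr (f := fun z : {z : G // z ∉ (↑F : Set G)} =>
      (if V z.1 + g z.1 ∈ W then (1:ℝ≥0∞) else 0))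
    (g := fun z : {z : G // z ∉ (↑F : Set G)} => (if V z.1 ∈ U then (1:ℝ≥0∞) else 0))
    (by intro z; by_cases h : V z.1 ∈ U <;> simp [h, hbi z.1, (hbi z.1).not])]
  have h2 : ∑' z : {z : G // z ∉ (↑F : Set G)}, (if V z.1 ∈ U then (1:ℝ≥0∞) else 0)
      = ∑' z : G, (if z ∉ F ∧ V z ∈ U then (1:ℝ≥0∞) else 0) := by
    rw [show ∑' z : {z : G // z ∉ (↑F : Set G)}, (if V z.1 ∈ U then (1:ℝ≥0∞) else 0)
        = ∑' z : ((↑F : Set G)ᶜ : Set G), (if V z.1 ∈ U then (1:ℝ≥0∞) else 0) from rfl,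
      tsum_subtype ((↑F : Set G)ᶜ) (fun z => if V z ∈ U then (1:ℝ≥0∞) else 0)]
    refine tsum_congr fun z => ?_
    by_cases h : z ∈ F <;> by_cases h' : V z ∈ U <;>
      simp [Set.indicator_apply, h, h']
  rw [h2]
  have hfin : {z : G | z ∉ F ∧ V z ∈ U}.Finite := hU.subset (by intro z hz; exact hz.2)
  have h3 : (∑' (z : G), if z ∉ F ∧ V z ∈ U then (1:ℝ≥0∞) else 0)
      = (hfin.toFinset.card : ℝ≥0∞) := by
    rw [← tsum_ite_eq_card _ hfin]; exact tsum_congr fun z => by congr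
  rw [h3]
  have he : hfin.toFinset = hU.toFinset \ F := by
    ext z; simp [Set.Finite.mem_toFinset, and_comm]
  have hFsub : F ⊆ hU.toFinset := fun z hz => (Set.Finite.mem_toFinset hU).2 (hsub z hz)
  rw [he, Finset.card_sdiff_of_subset hFsub, ← Nat.cast_add,
    Nat.sub_add_cancel (Finset.card_le_card hFsub)]

lemma main_aux {G : Type*} [Countable G] {Ω : Type*} [MeasurableSpace Ω]
    (P : Measure Ω)
    (V : G → ℝ) (g : G → Ω → ℝ) (hg : ∀ z, Measurable (g z))
    (W : ℕ → Set ℝ) (hW : ∀ n, MeasurableSet (W n))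
    (U : ℕ → Set ℝ) (hU : ∀ n, {z : G | V z ∈ U n}.Finite)
    (hUabs : ∀ z : G, ∀ᶠ n in atTop, V z ∈ U n)
    (hkey : ∀ᵐ ω ∂P, ∀ᶠ n in atTop, ∀ z : G, (V z + g z ω ∈ W n ↔ V z ∈ U n))
    (S T : Finset G) (hST : S.card ≠ T.card) :
    ∃ A : Set (Measure ℝ),
      P.map (fun ω => projPerturbedLattice V (fun z => g z ω) (↑S : Set G)) Aᶜ = 0 ∧
      P.map (fun ω => projPerturbedLattice V (fun z => g z ω) (↑T : Set G)) A = 0 := by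
  classical
  set L : ℕ → ℕ := fun n => (hU n).toFinset.card with hLdef
  set A : Set (Measure ℝ) := {μ | ∀ᶠ n in atTop, μ (W n) + S.card = (L n : ℝ≥0∞)} with hA
  have hAmeas : MeasurableSet A := by
    have hrw : A = ⋃ N : ℕ, ⋂ n : ℕ, ⋂ _ : N ≤ n,
        {μ : Measure ℝ | μ (W n) + S.card = (L n : ℝ≥0∞)} := by
      ext μ; simp [hA, Filter.eventually_atTop]
    rw [hrw]
    refine MeasurableSet.iUnion fun N => MeasurableSet.iInter fun n =>
      MeasurableSet.iInter fun _ => ?_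
    exact ((Measure.measurable_coe (hW n)).add_const _) (measurableSet_singleton _)
  have hcount : ∀ F : Finset G, ∀ᵐ ω ∂P, ∀ᶠ n in atTop,
      projPerturbedLattice V (fun z => g z ω) (↑F) (W n) + F.card = (L n : ℝ≥0∞) := by
    intro F
    filter_upwards [hkey] with ω hω
    have hsub : ∀ᶠ n in atTop, ∀ z ∈ F, V z ∈ U n :=
      F.eventually_all.2 fun z _ => hUabs z
    filter_upwards [hω, hsub] with n h1 h2
    exact count_eq V _ (W n) (U n) (hW n) (hU n) h1 F h2
  have hmS := measurable_proj V g hg (↑S : Set G)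
  have hmT := measurable_proj V g hg (↑T : Set G)
  refine ⟨A, ?_, ?_⟩
  · rw [Measure.map_apply hmS hAmeas.compl]
    have : ∀ᵐ ω ∂P, (projPerturbedLattice V (fun z => g z ω) (↑S : Set G)) ∈ A := hcount S
    exact ae_iff.mp this
  · rw [Measure.map_apply hmT hAmeas]
    have : ∀ᵐ ω ∂P, (projPerturbedLattice V (fun z => g z ω) (↑T : Set G)) ∉ A := by
      filter_upwards [hcount T] with ω hω hmem
      obtain ⟨n, h1, h2⟩ := (hω.and hmem).exists
      have hfin : (projPerturbedLattice V (fun z => g z ω) (↑T : Set G)) (W n) ≠ ⊤ := by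
        intro h; rw [h] at h1; simp at h1
      have heq : (projPerturbedLattice V (fun z => g z ω) (↑T : Set G)) (W n) + T.card
          = (projPerturbedLattice V (fun z => g z ω) (↑T : Set G)) (W n) + S.card := by
        rw [h1, h2]
      exact hST ((Nat.cast_inj.mp (WithTop.add_left_cancel hfin heq)).symm)
    have h0 : P {ω | ¬ (projPerturbedLattice V (fun z => g z ω) (↑T : Set G)) ∉ A} = 0 :=
      ae_iff.mp this
    simp only [not_not] at h0; exact h0

lemma exists_isLeast_of_initialSegFinite {Q : Set ℝ} (hfin : ∀ x : ℝ, (Q ∩ Iic x).Finite)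
    {s : Set ℝ} (hsub : s ⊆ Q) (hne : s.Nonempty) : ∃ m, IsLeast s m := by
  obtain ⟨x₀, hx₀⟩ := hne
  have hsf : (s ∩ Iic x₀).Finite := ((hfin x₀).subset (by
    intro y hy; exact ⟨hsub hy.1, hy.2⟩))
  have hne' : (s ∩ Iic x₀).Nonempty := ⟨x₀, hx₀, Set.mem_Iic.mpr le_rfl⟩
  obtain ⟨m, hm, hmle⟩ : ∃ m ∈ s ∩ Iic x₀, ∀ y ∈ s ∩ Iic x₀, id y ≤ id m → id m = id y := by
    obtain ⟨m, hm, h⟩ := hsf.exists_minimal hne'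
    exact ⟨m, hm, fun y hy hle => le_antisymm (h hy hle) hle⟩
  refine ⟨m, hm.1, fun y hy => ?_⟩
  by_cases hyx : y ≤ x₀
  · by_contra hlt
    push_neg at hlt
    exact absurd (hmle y ⟨hy, hyx⟩ hlt.le) (ne_of_gt hlt)
  · exact le_trans hm.2 (le_of_not_ge hyx)

lemma exists_strictMono_enum {Q : Set ℝ} (hinf : Q.Infinite)
    (hfin : ∀ x : ℝ, (Q ∩ Iic x).Finite) :
    ∃ r : ℕ → ℝ, StrictMono r ∧ range r = Q := by
  classical
  -- the minimum of Q above a point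
  have hne : ∀ x : ℝ, (Q ∩ Ioi x).Nonempty := by
    intro x
    rcases Set.not_subset.mp (fun hs => hinf ((hfin x).subset
      (fun y hy => ⟨hy, hs hy⟩))) with ⟨y, hyQ, hy⟩
    exact ⟨y, hyQ, Set.mem_Ioi.mpr (lt_of_not_ge fun h => hy h)⟩
  have hleast : ∀ x : ℝ, ∃ m, IsLeast (Q ∩ Ioi x) m :=
    fun x => exists_isLeast_of_initialSegFinite hfin (fun y hy => hy.1) (hne x)
  have hQne : Q.Nonempty := hinf.nonempty
  obtain ⟨m0, hm0⟩ := exists_isLeast_of_initialSegFinite hfin (le_refl Q) hQne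
  let next : ℝ → ℝ := fun x => (hleast x).choose
  have hnext : ∀ x, IsLeast (Q ∩ Ioi x) (next x) := fun x => (hleast x).choose_spec
  let r : ℕ → ℝ := fun n => Nat.rec m0 (fun _ x => next x) n
  have hrsucc : ∀ n, r (n + 1) = next (r n) := fun n => rfl
  have hmono : StrictMono r := by
    apply strictMono_nat_of_lt_succ
    intro n
    exact (hnext (r n)).1.2
  have hrQ : ∀ n, r n ∈ Q := by
    intro n
    cases n with
    | zero => exact hm0.1
    | succ k => exact (hnext (r k)).1.1
  refine ⟨r, hmono, Set.Subset.antisymm (fun x hx => ?_) (fun q hq => ?_)⟩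
  · obtain ⟨n, rfl⟩ := hx; exact hrQ n
  · -- q is r of the number of elements of Q below it
    have key : ∀ n : ℕ, ∀ q ∈ Q, ∀ h : (Q ∩ Iio q).Finite, h.toFinset.card = n →
        q = r n := by
      intro n
      induction n with
      | zero =>
        intro q hq h hcard
        have hempty : Q ∩ Iio q = ∅ := by
          have h0 := Finset.card_eq_zero.mp hcard
          rwa [Set.Finite.toFinset_eq_empty] at h0
        have : IsLeast Q q := ⟨hq, fun y hy => by
          by_contra hlt
          exact absurd (show y ∈ Q ∩ Iio q from ⟨hy, lt_of_not_ge hlt⟩) (by rw [hempty]; simp)⟩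
        exact this.unique hm0
      | succ k ih =>
        intro q hq h hcard
        have hnem : (Q ∩ Iio q).Nonempty := by
          rw [← Set.Finite.toFinset_nonempty h, ← Finset.card_pos, hcard]
          exact Nat.succ_pos k
        -- the greatest element below q
        obtain ⟨q', hq'mem, hq'max⟩ : ∃ q' ∈ Q ∩ Iio q, ∀ y ∈ Q ∩ Iio q, id q' ≤ id y → id q' = id y := by
          obtain ⟨q', hm, h'⟩ := h.exists_maximal hnem
          exact ⟨q', hm, fun y hy hle => le_antisymm hle (h' hy hle)⟩
        have hq'lt : q' < q := hq'mem.2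
        have hmax : ∀ y ∈ Q ∩ Iio q, y ≤ q' := by
          intro y hy
          by_contra hlt
          exact absurd (hq'max y hy (le_of_not_ge hlt)) (ne_of_lt (lt_of_not_ge hlt))
        have hsplit : Q ∩ Iio q' = (Q ∩ Iio q) \ {q'} := by
          ext y
          constructor
          · intro hy
            exact ⟨⟨hy.1, lt_trans hy.2 hq'lt⟩, fun hmem => (lt_irrefl q') (by
              simpa [Set.mem_singleton_iff.mp hmem] using hy.2)⟩
          · intro hy
            refine ⟨hy.1.1, lt_of_le_of_ne (hmax y hy.1) (fun he => hy.2 (by simp [he]))⟩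
        have hfin' : (Q ∩ Iio q').Finite := h.subset (by rw [hsplit]; exact Set.diff_subset)
        have hcard' : hfin'.toFinset.card = k := by
          have : hfin'.toFinset = h.toFinset \ {q'} := by
            ext y; simp [Set.Finite.mem_toFinset, hsplit]
          rw [this, Finset.card_sdiff_of_subset (by
            simp only [Finset.singleton_subset_iff, Set.Finite.mem_toFinset]
            exact hq'mem), hcard]
          simp
        have hq'r : q' = r k := ih q' hq'mem.1 hfin' hcard'
        have : IsLeast (Q ∩ Ioi q') q := by
          refine ⟨⟨hq, hq'lt⟩, fun y hy => ?_⟩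
          by_contra hlt
          push_neg at hlt
          exact absurd (hmax y ⟨hy.1, hlt⟩) (not_le.mpr hy.2)
        have huniq := this.unique (hnext q')
        rw [huniq, hq'r, hrsucc]
    exact ⟨_, (key _ q hq ((hfin q).subset (fun y hy => ⟨hy.1, Set.mem_Iic.mpr (le_of_lt hy.2)⟩)) rfl).symm⟩

lemma exists_strictAnti_enum {Q : Set ℝ} (hinf : Q.Infinite)
    (hfin : ∀ x : ℝ, (Q ∩ Ici x).Finite) :
    ∃ t : ℕ → ℝ, StrictAnti t ∧ range t = Q := by
  have hinf' : (Neg.neg '' Q).Infinite := hinf.image (Set.injOn_of_injective neg_injective)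
  have hfin' : ∀ x : ℝ, ((Neg.neg '' Q) ∩ Iic x).Finite := by
    intro x
    have : (Neg.neg '' Q) ∩ Iic x ⊆ Neg.neg '' (Q ∩ Ici (-x)) := by
      rintro y ⟨⟨q, hq, rfl⟩, hy⟩
      exact ⟨q, ⟨hq, Set.mem_Ici.mpr (by have := Set.mem_Iic.mp hy; linarith)⟩, rfl⟩
    exact ((hfin (-x)).image _).subset this
  obtain ⟨r, hr, hrange⟩ := exists_strictMono_enum hinf' hfin'
  refine ⟨fun n => -(r n), fun a b hab => by simpa using hr hab, ?_⟩
  ext x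
  constructor
  · rintro ⟨n, rfl⟩
    have : r n ∈ Neg.neg '' Q := hrange ▸ Set.mem_range_self n
    obtain ⟨q, hq, hqe⟩ := this
    simpa [← hqe] using hq
  · intro hx
    have : -x ∈ range r := by rw [hrange]; exact ⟨x, hx, rfl⟩
    obtain ⟨n, hn⟩ := this
    exact ⟨n, by show -r n = x; rw [hn]; simp⟩

lemma finite_V_preimage {G : Type*} (V : G → ℝ) (hlevel : ∀ x : ℝ, {z : G | V z = x}.Finite)
    {s : Set ℝ} (hvals : (range V ∩ s).Finite) : {z : G | V z ∈ s}.Finite := by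
  have hsub : {z : G | V z ∈ s} ⊆ ⋃ x ∈ (range V ∩ s), {z : G | V z = x} := by
    intro z hz
    exact Set.mem_biUnion ⟨⟨z, rfl⟩, hz⟩ rfl
  exact (hvals.biUnion (fun x _ => hlevel x)).subset hsub

lemma bounded_vals_finite {G : Type*} {V : G → ℝ}
    (hacc : ∀ x : ℝ, ¬ AccPt x (Filter.principal (range V))) (a b : ℝ) :
    (range V ∩ Icc a b).Finite := by
  by_contra hinf
  rw [← Set.not_infinite, not_not] at hinf
  obtain ⟨x, _, hx⟩ := hinf.exists_accPt_of_subset_isCompact isCompact_Icc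
    (Set.inter_subset_right)
  exact hacc x (hx.mono (le_principal_iff.mpr (by
    exact mem_principal.mpr Set.inter_subset_left)))

lemma right_side {G : Type*} (V : G → ℝ) (g : G → ℝ) (r : ℕ → ℝ)
    (hr : StrictMono r) (hrange : range r = {x : ℝ | x ∈ range V ∧ 0 ≤ x})
    (hEfin : ∀ n : ℕ, {z : G | V z ∈ Icc 0 (r n)}.Finite)
    (hε : Tendsto (fun n : ℕ => (r n - r (n - 1))⁻¹ *
        sSup ((fun z => |g z|) '' {z : G | V z ∈ Icc 0 (r n)})) atTop (nhds 0)) :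
    ∃ N : ℕ, ∀ n ≥ N, ∀ z : G,
      (0 ≤ V z → V z ≤ r n → V z + g z < (r n + r (n + 1)) / 2) ∧
      (r n < V z → (r n + r (n + 1)) / 2 < V z + g z) := by
  set ε : ℕ → ℝ := fun n => sSup ((fun z => |g z|) '' {z : G | V z ∈ Icc 0 (r n)}) with hεdef
  have hr0 : ∀ n, 0 ≤ r n := by
    intro n
    have : r n ∈ {x : ℝ | x ∈ range V ∧ 0 ≤ x} := hrange ▸ Set.mem_range_self n
    exact this.2
  have hrV : ∀ n, r n ∈ range V := by
    intro n
    have : r n ∈ {x : ℝ | x ∈ range V ∧ 0 ≤ x} := hrange ▸ Set.mem_range_self n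
    exact this.1
  have hEne : ∀ n, {z : G | V z ∈ Icc 0 (r n)}.Nonempty := by
    intro n
    obtain ⟨z, hz⟩ := hrV n
    exact ⟨z, show V z ∈ Icc 0 (r n) by rw [hz]; exact ⟨hr0 n, le_rfl⟩⟩
  have hle : ∀ n, ∀ z : G, V z ∈ Icc 0 (r n) → |g z| ≤ ε n := by
    intro n z hz
    exact le_csSup (((hEfin n).image _).bddAbove) ⟨z, hz, rfl⟩
  have hεmono : Monotone ε := by
    intro n m hnm
    apply csSup_le_csSup (((hEfin m).image _).bddAbove) ((hEne n).image _)
    apply Set.image_mono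
    intro z hz
    exact ⟨hz.1, le_trans hz.2 (hr.monotone hnm)⟩
  have hev : ∀ᶠ n : ℕ in atTop, (r n - r (n - 1))⁻¹ * ε n < 1 / 2 :=
    hε.eventually_lt_const (by norm_num)
  obtain ⟨N₀, hN₀⟩ := Filter.eventually_atTop.mp hev
  set N := N₀ + 1 with hNdef
  have hgap : ∀ n ≥ N, ε n < (r n - r (n - 1)) / 2 := by
    intro n hn
    have h1 : n - 1 < n := Nat.sub_lt (by omega) one_pos
    have hpos : 0 < r n - r (n - 1) := sub_pos.mpr (hr h1)
    have h2 := hN₀ n (by omega)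
    nlinarith [mul_pos hpos (inv_pos.mpr hpos),
      (mul_lt_mul_iff_right₀ hpos).mpr h2, mul_inv_cancel₀ (ne_of_gt hpos)]
  refine ⟨N, fun n hn z => ⟨fun hz0 hzr => ?_, fun hzr => ?_⟩⟩
  · -- below: point < midpoint
    have hzE : V z ∈ Icc 0 (r (n + 1)) := ⟨hz0, le_trans hzr (hr.monotone (Nat.le_succ n))⟩
    have h1 : |g z| ≤ ε (n + 1) := hle (n + 1) z hzE
    have h2 : ε (n + 1) < (r (n + 1) - r n) / 2 := by
      have := hgap (n + 1) (by omega)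
      simpa using this
    have h3 : g z ≤ |g z| := le_abs_self _
    linarith
  · -- above: point > midpoint
    have hz0 : 0 ≤ V z := le_trans (hr0 n) (le_of_lt hzr)
    have hzQ : V z ∈ range r := by
      rw [hrange]; exact ⟨⟨z, rfl⟩, hz0⟩
    obtain ⟨k, hk⟩ := hzQ
    have hnk : n < k := hr.lt_iff_lt.mp (by rw [hk]; exact hzr)
    have hkN : k ≥ N := by omega
    have hzE : V z ∈ Icc 0 (r k) := ⟨hz0, by rw [← hk]⟩
    have h1 : |g z| ≤ ε k := hle k z hzE
    have h2 : ε k < (r k - r (k - 1)) / 2 := hgap k hkN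
    have h3 : -g z ≤ |g z| := neg_le_abs _
    have h4 : r (n + 1) ≤ r k := hr.monotone (by omega)
    have h5 : r n ≤ r (k - 1) := hr.monotone (by omega)
    have h6 : V z = r k := hk.symm
    linarith

lemma left_side {G : Type*} (V : G → ℝ) (g : G → ℝ) (t : ℕ → ℝ)
    (ht : StrictAnti t) (hrange : range t = {x : ℝ | x ∈ range V ∧ x < 0})
    (hEfin : ∀ n : ℕ, {z : G | V z ∈ Ico (t n) 0}.Finite)
    (hδ : Tendsto (fun n : ℕ => |t n - t (n - 1)|⁻¹ *
        sSup ((fun z => |g z|) '' {z : G | V z ∈ Ico (t n) 0})) atTop (nhds 0)) :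
    ∃ N : ℕ, ∀ n ≥ N, ∀ z : G,
      (t n ≤ V z → V z < 0 → (t n + t (n + 1)) / 2 < V z + g z) ∧
      (V z < t n → V z + g z < (t n + t (n + 1)) / 2) := by
  set δ : ℕ → ℝ := fun n => sSup ((fun z => |g z|) '' {z : G | V z ∈ Ico (t n) 0}) with hδdef
  have ht0 : ∀ n, t n < 0 := by
    intro n
    have : t n ∈ {x : ℝ | x ∈ range V ∧ x < 0} := hrange ▸ Set.mem_range_self n
    exact this.2
  have htV : ∀ n, t n ∈ range V := by
    intro n
    have : t n ∈ {x : ℝ | x ∈ range V ∧ x < 0} := hrange ▸ Set.mem_range_self n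
    exact this.1
  have hEne : ∀ n, {z : G | V z ∈ Ico (t n) 0}.Nonempty := by
    intro n
    obtain ⟨z, hz⟩ := htV n
    exact ⟨z, show V z ∈ Ico (t n) 0 by rw [hz]; exact ⟨le_rfl, ht0 n⟩⟩
  have hle : ∀ n, ∀ z : G, V z ∈ Ico (t n) 0 → |g z| ≤ δ n := by
    intro n z hz
    exact le_csSup (((hEfin n).image _).bddAbove) ⟨z, hz, rfl⟩
  have hδmono : Monotone δ := by
    intro n m hnm
    apply csSup_le_csSup (((hEfin m).image _).bddAbove) ((hEne n).image _)
    apply Set.image_mono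
    intro z hz
    exact ⟨le_trans (ht.antitone hnm) hz.1, hz.2⟩
  have hev : ∀ᶠ n : ℕ in atTop, |t n - t (n - 1)|⁻¹ * δ n < 1 / 2 :=
    hδ.eventually_lt_const (by norm_num)
  obtain ⟨N₀, hN₀⟩ := Filter.eventually_atTop.mp hev
  set N := N₀ + 1 with hNdef
  have hgap : ∀ n ≥ N, δ n < (t (n - 1) - t n) / 2 := by
    intro n hn
    have h1 : n - 1 < n := Nat.sub_lt (by omega) one_pos
    have hpos : 0 < t (n - 1) - t n := sub_pos.mpr (ht h1)
    have habs : |t n - t (n - 1)| = t (n - 1) - t n := by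
      rw [abs_sub_comm]; exact abs_of_pos hpos
    have h2 := hN₀ n (by omega)
    rw [habs] at h2
    nlinarith [(mul_lt_mul_iff_right₀ hpos).mpr h2, mul_inv_cancel₀ (ne_of_gt hpos)]
  refine ⟨N, fun n hn z => ⟨fun hzt hz0 => ?_, fun hzt => ?_⟩⟩
  · have hzE : V z ∈ Ico (t (n + 1)) 0 := ⟨le_trans (ht.antitone (Nat.le_succ n)) hzt, hz0⟩
    have h1 : |g z| ≤ δ (n + 1) := hle (n + 1) z hzE
    have h2 : δ (n + 1) < (t n - t (n + 1)) / 2 := by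
      have := hgap (n + 1) (by omega)
      simpa using this
    have h3 : -g z ≤ |g z| := neg_le_abs _
    linarith
  · have hz0 : V z < 0 := lt_trans hzt (ht0 n)
    have hzQ : V z ∈ range t := by
      rw [hrange]; exact ⟨⟨z, rfl⟩, hz0⟩
    obtain ⟨k, hk⟩ := hzQ
    have hnk : n < k := ht.lt_iff_gt.mp (by rw [hk]; exact hzt)
    have hkN : k ≥ N := by omega
    have hzE : V z ∈ Ico (t k) 0 := ⟨by rw [← hk], hz0⟩
    have h1 : |g z| ≤ δ k := hle k z hzE
    have h2 : δ k < (t (k - 1) - t k) / 2 := hgap k hkN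
    have h3 : g z ≤ |g z| := le_abs_self _
    have h4 : t k ≤ t (n + 1) := ht.antitone (by omega)
    have h5 : t (k - 1) ≤ t n := ht.antitone (by omega)
    have h6 : V z = t k := hk.symm
    linarith
/-- **Main theorem**: under the no-accumulation and finite-level-set assumptions on `V`, and
the almost sure noise decay conditions (on the relevant sides, according to the boundedness
of `V`), deleting finite subsets `S`, `T` of different cardinalities yields point processes
whose laws are mutually singular after completion. -/
theorem projected_perturbed_lattice_rigidity
    {G : Type*} [Countable G] [Infinite G]
    (V : G → ℝ)
    (hacc : ∀ x : ℝ, ¬ AccPt x (Filter.principal (Set.range V)))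
    (hlevel : ∀ x : ℝ, {z : G | V z = x}.Finite)
    {Ω : Type*} [MeasurableSpace Ω] (P : Measure Ω) [IsProbabilityMeasure P]
    (g : G → Ω → ℝ) (hg : ∀ z, Measurable (g z))
    (hloc : ∀ᵐ ω ∂P,
      IsLocallyFiniteMeasure (projPerturbedLattice V (fun z => g z ω) (∅ : Set G)))
    (h1 : (BddBelow (Set.range V) ∨ ¬ BddAbove (Set.range V)) →
      ∀ r : ℕ → ℝ, StrictMono r →
        Set.range r = {x : ℝ | x ∈ Set.range V ∧ 0 ≤ x} →
        ∀ᵐ ω ∂P, Tendsto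
          (fun n : ℕ => (r n - r (n - 1))⁻¹ *
            sSup ((fun z => |g z ω|) '' {z : G | V z ∈ Set.Icc 0 (r n)}))
          atTop (nhds 0))
    (h2 : (BddAbove (Set.range V) ∨ ¬ BddBelow (Set.range V)) →
      ∀ t : ℕ → ℝ, StrictAnti t →
        Set.range t = {x : ℝ | x ∈ Set.range V ∧ x < 0} →
        ∀ᵐ ω ∂P, Tendsto
          (fun n : ℕ => |t n - t (n - 1)|⁻¹ *
            sSup ((fun z => |g z ω|) '' {z : G | V z ∈ Set.Ico (t n) 0}))
          atTop (nhds 0))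
    (S T : Finset G) (hST : S.card ≠ T.card) :
    ∃ A : Set (Measure ℝ),
      P.map (fun ω => projPerturbedLattice V (fun z => g z ω) (↑S : Set G)) Aᶜ = 0 ∧
      P.map (fun ω => projPerturbedLattice V (fun z => g z ω) (↑T : Set G)) A = 0 := by
  classical
  have hbvf : ∀ a b : ℝ, (range V ∩ Icc a b).Finite := bounded_vals_finite hacc
  have hRinf : (range V).Infinite := by
    intro hfin
    have huniv : (Set.univ : Set G).Finite := by
      have h := finite_V_preimage V hlevel (s := Set.univ) (by simpa using hfin)
      simpa using h
    exact Set.infinite_univ huniv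
  have hnotboth : ¬ (BddBelow (range V) ∧ BddAbove (range V)) := by
    rintro ⟨⟨a, ha⟩, ⟨b, hb⟩⟩
    apply hRinf
    have heq : range V = range V ∩ Icc a b := by
      ext x
      exact ⟨fun hx => ⟨hx, ha hx, hb hx⟩, fun hx => hx.1⟩
    rw [heq]
    exact hbvf a b
  -- facts about the positive side when range V is unbounded above
  by_cases hbb : BddBelow (range V)
  · -- Case A : bounded below, so unbounded above; use right windows only
    have hba : ¬ BddAbove (range V) := fun h => hnotboth ⟨hbb, h⟩
    obtain ⟨B, hB⟩ := hbb
    have hQunb : ∀ b : ℝ, ∃ x ∈ {x : ℝ | x ∈ range V ∧ 0 ≤ x}, b < x := by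
      intro b
      obtain ⟨y, hyR, hy⟩ := not_bddAbove_iff.mp hba (max b 0)
      exact ⟨y, ⟨hyR, le_trans (le_max_right b 0) hy.le⟩, lt_of_le_of_lt (le_max_left b 0) hy⟩
    have hQfin : ∀ x : ℝ, ({x : ℝ | x ∈ range V ∧ 0 ≤ x} ∩ Iic x).Finite := by
      intro x
      apply (hbvf 0 x).subset
      rintro y ⟨⟨hyR, hy0⟩, hyx⟩
      exact ⟨hyR, hy0, hyx⟩
    have hQinf : {x : ℝ | x ∈ range V ∧ 0 ≤ x}.Infinite := by
      intro hfin
      obtain ⟨b, hb⟩ := hfin.bddAbove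
      obtain ⟨x, hx, hbx⟩ := hQunb b
      exact absurd (hb hx) (not_le.mpr hbx)
    obtain ⟨r, hr, hrange⟩ := exists_strictMono_enum hQinf hQfin
    have hr0 : ∀ n, 0 ≤ r n := fun n =>
      (show r n ∈ {x : ℝ | x ∈ range V ∧ 0 ≤ x} from hrange ▸ Set.mem_range_self n).2
    have hrtop : Tendsto r atTop atTop := by
      apply tendsto_atTop_atTop_of_monotone hr.monotone
      intro b
      obtain ⟨x, hx, hbx⟩ := hQunb b
      obtain ⟨n, hn⟩ := (hrange ▸ hx : x ∈ range r)
      exact ⟨n, by rw [hn]; exact hbx.le⟩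
    have hEfin : ∀ n : ℕ, {z : G | V z ∈ Icc 0 (r n)}.Finite :=
      fun n => finite_V_preimage V hlevel (hbvf 0 (r n))
    have hεae := h1 (Or.inl ⟨B, hB⟩) r hr hrange
    set m : ℕ → ℝ := fun n => (r n + r (n + 1)) / 2 with hmdef
    have hrm : ∀ n, r n ≤ m n := fun n => by
      have := (hr (Nat.lt_succ_self n)).le
      simp only [hmdef]; linarith
    have hmtop : Tendsto m atTop atTop := tendsto_atTop_mono hrm hrtop
    have hFneg : {z : G | V z < 0}.Finite := by
      apply finite_V_preimage V hlevel (s := Iio 0)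
      apply (hbvf B 0).subset
      rintro y ⟨hyR, hy⟩
      exact ⟨hyR, hB hyR, (Set.mem_Iio.mp hy).le⟩
    apply main_aux P V g hg (fun n => Iic (m n)) (fun n => measurableSet_Iic)
      (fun n => Iic (r n))
    · intro n
      apply finite_V_preimage V hlevel
      apply (hbvf B (r n)).subset
      rintro y ⟨hyR, hy⟩
      exact ⟨hyR, hB hyR, hy⟩
    · intro z
      filter_upwards [hrtop.eventually_ge_atTop (V z)] with n hn
      exact hn
    · filter_upwards [hεae] with ω hεω
      obtain ⟨N, hN⟩ := right_side V (fun z => g z ω) r hr hrange hEfin hεω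
      have hstray : ∀ᶠ n in atTop, ∀ z ∈ {z : G | V z < 0}, V z + g z ω ≤ m n := by
        rw [Set.Finite.eventually_all hFneg]
        intro z _
        exact hmtop.eventually_ge_atTop (V z + g z ω)
      filter_upwards [eventually_ge_atTop N, hstray] with n hn hs z
      by_cases hz0 : 0 ≤ V z
      · by_cases hzr : V z ≤ r n
        · exact iff_of_true (Set.mem_Iic.mpr ((hN n hn z).1 hz0 hzr).le) hzr
        · push_neg at hzr
          exact iff_of_false (fun hmem =>
            absurd (Set.mem_Iic.mp hmem) (not_le.mpr ((hN n hn z).2 hzr)))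
            (not_le.mpr hzr)
      · push_neg at hz0
        exact iff_of_true (Set.mem_Iic.mpr (hs z hz0))
          (Set.mem_Iic.mpr (le_trans hz0.le (hr0 n)))
    · exact hST
  · -- range V is unbounded below: set up the negative-side enumeration
    have hQunb' : ∀ b : ℝ, ∃ x ∈ {x : ℝ | x ∈ range V ∧ x < 0}, x < b := by
      intro b
      obtain ⟨y, hyR, hy⟩ := not_bddBelow_iff.mp hbb (min b 0)
      exact ⟨y, ⟨hyR, lt_of_lt_of_le hy (min_le_right b 0)⟩,
        lt_of_lt_of_le hy (min_le_left b 0)⟩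
    have hQfin' : ∀ x : ℝ, ({x : ℝ | x ∈ range V ∧ x < 0} ∩ Ici x).Finite := by
      intro x
      apply (hbvf x 0).subset
      rintro y ⟨⟨hyR, hy0⟩, hyx⟩
      exact ⟨hyR, hyx, hy0.le⟩
    have hQinf' : {x : ℝ | x ∈ range V ∧ x < 0}.Infinite := by
      intro hfin
      obtain ⟨b, hb⟩ := hfin.bddBelow
      obtain ⟨x, hx, hbx⟩ := hQunb' b
      exact absurd (hb hx) (not_le.mpr hbx)
    obtain ⟨t, ht, htrange⟩ := exists_strictAnti_enum hQinf' hQfin'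
    have ht0 : ∀ n, t n < 0 := fun n =>
      (show t n ∈ {x : ℝ | x ∈ range V ∧ x < 0} from htrange ▸ Set.mem_range_self n).2
    have htbot : Tendsto t atTop atBot := by
      apply tendsto_atTop_atBot_of_antitone ht.antitone
      intro b
      obtain ⟨x, hx, hbx⟩ := hQunb' b
      obtain ⟨n, hn⟩ := (htrange ▸ hx : x ∈ range t)
      exact ⟨n, by rw [hn]; exact hbx.le⟩
    set c : ℕ → ℝ := fun n => (t n + t (n + 1)) / 2 with hcdef
    have hct : ∀ n, c n ≤ t n := fun n => by
      have := (ht (Nat.lt_succ_self n)).le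
      simp only [hcdef]; linarith
    have hc0 : ∀ n, c n < 0 := fun n => by
      have h1 := ht0 n; have h2 := ht0 (n + 1)
      simp only [hcdef]; linarith
    have hcbot : Tendsto c atTop atBot := tendsto_atBot_mono hct htbot
    have hEfinL : ∀ n : ℕ, {z : G | V z ∈ Ico (t n) 0}.Finite := by
      intro n
      apply finite_V_preimage V hlevel
      apply (hbvf (t n) 0).subset
      rintro y ⟨hyR, hy1, hy2⟩
      exact ⟨hyR, hy1, hy2.le⟩
    by_cases hba : BddAbove (range V)
    · -- Case B : bounded above, unbounded below; use left windows only
      obtain ⟨B, hB⟩ := hba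
      have hδae := h2 (Or.inl ⟨B, hB⟩) t ht htrange
      have hFpos : {z : G | 0 ≤ V z}.Finite := by
        apply finite_V_preimage V hlevel (s := Ici 0)
        apply (hbvf 0 B).subset
        rintro y ⟨hyR, hy⟩
        exact ⟨hyR, hy, hB hyR⟩
      apply main_aux P V g hg (fun n => Ici (c n)) (fun n => measurableSet_Ici)
        (fun n => Ici (t n))
      · intro n
        apply finite_V_preimage V hlevel
        apply (hbvf (t n) B).subset
        rintro y ⟨hyR, hy⟩
        exact ⟨hyR, hy, hB hyR⟩
      · intro z
        filter_upwards [htbot.eventually_le_atBot (V z)] with n hn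
        exact hn
      · filter_upwards [hδae] with ω hδω
        obtain ⟨N, hN⟩ := left_side V (fun z => g z ω) t ht htrange hEfinL hδω
        have hstray : ∀ᶠ n in atTop, ∀ z ∈ {z : G | 0 ≤ V z}, c n ≤ V z + g z ω := by
          rw [Set.Finite.eventually_all hFpos]
          intro z _
          exact hcbot.eventually_le_atBot (V z + g z ω)
        filter_upwards [eventually_ge_atTop N, hstray] with n hn hs z
        simp only [Set.mem_Ici]
        by_cases hz0 : V z < 0
        · by_cases hzt : t n ≤ V z
          · exact iff_of_true ((hN n hn z).1 hzt hz0).le hzt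
          · push_neg at hzt
            exact iff_of_false (fun hmem =>
              absurd hmem (not_le.mpr ((hN n hn z).2 hzt))) (not_le.mpr hzt)
        · push_neg at hz0
          exact iff_of_true (hs z hz0) (le_trans (ht0 n).le hz0)
      · exact hST
    · -- Case C : unbounded on both sides; use two-sided windows
      have hQunb : ∀ b : ℝ, ∃ x ∈ {x : ℝ | x ∈ range V ∧ 0 ≤ x}, b < x := by
        intro b
        obtain ⟨y, hyR, hy⟩ := not_bddAbove_iff.mp hba (max b 0)
        exact ⟨y, ⟨hyR, le_trans (le_max_right b 0) hy.le⟩,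
          lt_of_le_of_lt (le_max_left b 0) hy⟩
      have hQfin : ∀ x : ℝ, ({x : ℝ | x ∈ range V ∧ 0 ≤ x} ∩ Iic x).Finite := by
        intro x
        apply (hbvf 0 x).subset
        rintro y ⟨⟨hyR, hy0⟩, hyx⟩
        exact ⟨hyR, hy0, hyx⟩
      have hQinf : {x : ℝ | x ∈ range V ∧ 0 ≤ x}.Infinite := by
        intro hfin
        obtain ⟨b, hb⟩ := hfin.bddAbove
        obtain ⟨x, hx, hbx⟩ := hQunb b
        exact absurd (hb hx) (not_le.mpr hbx)
      obtain ⟨r, hr, hrange⟩ := exists_strictMono_enum hQinf hQfin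
      have hr0 : ∀ n, 0 ≤ r n := fun n =>
        (show r n ∈ {x : ℝ | x ∈ range V ∧ 0 ≤ x} from hrange ▸ Set.mem_range_self n).2
      have hrtop : Tendsto r atTop atTop := by
        apply tendsto_atTop_atTop_of_monotone hr.monotone
        intro b
        obtain ⟨x, hx, hbx⟩ := hQunb b
        obtain ⟨n, hn⟩ := (hrange ▸ hx : x ∈ range r)
        exact ⟨n, by rw [hn]; exact hbx.le⟩
      have hEfinR : ∀ n : ℕ, {z : G | V z ∈ Icc 0 (r n)}.Finite :=
        fun n => finite_V_preimage V hlevel (hbvf 0 (r n))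
      have hεae := h1 (Or.inr hba) r hr hrange
      have hδae := h2 (Or.inr hbb) t ht htrange
      set m : ℕ → ℝ := fun n => (r n + r (n + 1)) / 2 with hmdef
      have hrm : ∀ n, r n ≤ m n := fun n => by
        have := (hr (Nat.lt_succ_self n)).le
        simp only [hmdef]; linarith
      have hm0 : ∀ n, 0 ≤ m n := fun n => le_trans (hr0 n) (hrm n)
      have hmtop : Tendsto m atTop atTop := tendsto_atTop_mono hrm hrtop
      apply main_aux P V g hg (fun n => Icc (c n) (m n)) (fun n => measurableSet_Icc)
        (fun n => Icc (t n) (r n))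
      · intro n
        exact finite_V_preimage V hlevel (hbvf (t n) (r n))
      · intro z
        filter_upwards [htbot.eventually_le_atBot (V z),
          hrtop.eventually_ge_atTop (V z)] with n h1 h2
        exact ⟨h1, h2⟩
      · filter_upwards [hεae, hδae] with ω hεω hδω
        obtain ⟨N₁, hN₁⟩ := right_side V (fun z => g z ω) r hr hrange hEfinR hεω
        obtain ⟨N₂, hN₂⟩ := left_side V (fun z => g z ω) t ht htrange hEfinL hδω
        have hstrayR : ∀ᶠ n in atTop, ∀ z ∈ {z : G | V z ∈ Icc 0 (r N₁)},
            c n ≤ V z + g z ω := by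
          rw [Set.Finite.eventually_all (hEfinR N₁)]
          intro z _
          exact hcbot.eventually_le_atBot (V z + g z ω)
        have hstrayL : ∀ᶠ n in atTop, ∀ z ∈ {z : G | V z ∈ Ico (t N₂) 0},
            V z + g z ω ≤ m n := by
          rw [Set.Finite.eventually_all (hEfinL N₂)]
          intro z _
          exact hmtop.eventually_ge_atTop (V z + g z ω)
        filter_upwards [eventually_ge_atTop N₁, eventually_ge_atTop N₂,
          hstrayR, hstrayL] with n hn1 hn2 hsR hsL z
        simp only [Set.mem_Icc]
        by_cases hz0 : 0 ≤ V z
        · by_cases hzr : V z ≤ r n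
          · refine iff_of_true ⟨?_, ((hN₁ n hn1 z).1 hz0 hzr).le⟩
              ⟨le_trans (ht0 n).le hz0, hzr⟩
            by_cases hzr' : V z ≤ r N₁
            · exact hsR z ⟨hz0, hzr'⟩
            · push_neg at hzr'
              have hmid := (hN₁ N₁ le_rfl z).2 hzr'
              have h1 := hr0 N₁; have h2 := hr0 (N₁ + 1); have h3 := hc0 n
              linarith
          · push_neg at hzr
            refine iff_of_false (fun hmem => ?_)
              (fun hmem => absurd hmem.2 (not_le.mpr hzr))
            exact absurd hmem.2 (not_le.mpr ((hN₁ n hn1 z).2 hzr))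
        · push_neg at hz0
          by_cases hzt : t n ≤ V z
          · refine iff_of_true ⟨((hN₂ n hn2 z).1 hzt hz0).le, ?_⟩
              ⟨hzt, le_trans hz0.le (hr0 n)⟩
            by_cases hzt' : t N₂ ≤ V z
            · exact hsL z ⟨hzt', hz0⟩
            · push_neg at hzt'
              have hmid := (hN₂ N₂ le_rfl z).2 hzt'
              have h1 := ht0 N₂; have h2 := ht0 (N₂ + 1); have h3 := hm0 n
              linarith
          · push_neg at hzt
            refine iff_of_false (fun hmem =>
              absurd hmem.1 (not_le.mpr ((hN₂ n hn2 z).2 hzt)))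
              (fun hmem => absurd hmem.1 (not_le.mpr hzt))
      · exact hST
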